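/- arXiv:1504.00783 — 2 statements merged into one kernel-verified Lean document; each statement's English description precedes it below -/
import Mathlib

section
/- For every n ≥ 1 and every Δ ∈ ℂ, the unital complex subalgebra of End((ℂ²)^{⊗n}) ≅ M_{2ⁿ}(ℂ) generated by the three operators H, σ⁺₁ and σ⁻₁ is the whole algebra End((ℂ²)^{⊗n}), where H is the open XXZ Hamiltonian with anisotropy Δ. -/
open Matrix

noncomputable section

abbrev M2 : Type := Matrix (Fin 2) (Fin 2) ℂ

/-- Pauli matrices and raising/lowering operators. -/
def σx : M2 := !![0, 1; 1, 0]
def σy : M2 := !![0, -Complex.I; Complex.I, 0]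
def σz : M2 := !![1, 0; 0, -1]
def σ0 : M2 := 1
def σp : M2 := (1/2 : ℂ) • (σx + Complex.I • σy)
def σm : M2 := (1/2 : ℂ) • (σx - Complex.I • σy)

/-- Operators on the spin chain `(ℂ²)^{⊗n}`. -/
abbrev ChainOp (n : ℕ) : Type := Matrix (Fin n → Fin 2) (Fin n → Fin 2) ℂ

/-- A single-site operator `a` acting at site `x` (identity elsewhere). -/
def site {n : ℕ} (x : Fin n) (a : M2) : ChainOp n :=
  Matrix.of fun i j =>
    a (i x) (j x) * ∏ y ∈ Finset.univ.filter (fun y => y ≠ x), (if i y = j y then (1:ℂ) else 0)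

/-- The open XXZ Hamiltonian `H = Σ_{x=1}^{n-1} h_{x,x+1}` with anisotropy `Δ`. -/
def XXZ (Δ : ℂ) (n : ℕ) : ChainOp n :=
  ∑ x : Fin n,
    if h : (x : ℕ) + 1 < n then
      (2:ℂ) • (site x σp * site ⟨(x:ℕ)+1, h⟩ σm) + (2:ℂ) • (site x σm * site ⟨(x:ℕ)+1, h⟩ σp)
        + Δ • (site x σz * site ⟨(x:ℕ)+1, h⟩ σz)
    else 0

/-! ### Auxiliary 2×2 computations -/

lemma σp_eq : σp = !![0,1;0,0] := by
  simp only [σp, σx, σy]; ext i j; fin_cases i <;> fin_cases j <;>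
    norm_num [Complex.ext_iff]

lemma σm_eq : σm = !![0,0;1,0] := by
  simp only [σm, σx, σy]; ext i j; fin_cases i <;> fin_cases j <;>
    norm_num [Complex.ext_iff]

lemma σpp : σp * σp = 0 := by
  rw [σp_eq]; ext i j; fin_cases i <;> fin_cases j <;>
    norm_num [Matrix.mul_apply, Fin.sum_univ_two]

lemma σmm : σm * σm = 0 := by
  rw [σm_eq]; ext i j; fin_cases i <;> fin_cases j <;>
    norm_num [Matrix.mul_apply, Fin.sum_univ_two]

lemma σpm_add_σmp : σp * σm + σm * σp = 1 := by
  rw [σp_eq, σm_eq]; ext i j; fin_cases i <;> fin_cases j <;>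
    norm_num [Matrix.mul_apply, Fin.sum_univ_two, Matrix.one_apply]

lemma σpm_sub_σmp : σp * σm - σm * σp = σz := by
  rw [σp_eq, σm_eq]; ext i j; fin_cases i <;> fin_cases j <;>
    norm_num [Matrix.mul_apply, Fin.sum_univ_two, σz]

lemma σzp_sub_σpz : σz * σp - σp * σz = (2:ℂ) • σp := by
  rw [σp_eq]; ext i j; fin_cases i <;> fin_cases j <;>
    norm_num [Matrix.mul_apply, Fin.sum_univ_two, σz]

lemma σzm_sub_σmz : σz * σm - σm * σz = -((2:ℂ) • σm) := by
  rw [σm_eq]; ext i j; fin_cases i <;> fin_cases j <;>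
    norm_num [Matrix.mul_apply, Fin.sum_univ_two, σz]

lemma σzz_comm : σz * σz - σz * σz = 0 := sub_self _

/-! ### Tensor-product matrices -/

/-- The "tensor product" matrix with factor `f x` at site `x`. -/
def T {n : ℕ} (f : Fin n → M2) : ChainOp n :=
  Matrix.of fun i j => ∏ x, f x (i x) (j x)

lemma T_mul {n : ℕ} (f g : Fin n → M2) : T f * T g = T (fun x => f x * g x) := by
  ext i j
  simp only [T, Matrix.mul_apply, Matrix.of_apply]
  rw [Fintype.prod_sum (fun x (t : Fin 2) => f x (i x) t * g x t (j x))]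
  exact Finset.sum_congr rfl fun k _ => (Finset.prod_mul_distrib).symm

lemma T_one {n : ℕ} : (T (fun _ => 1) : ChainOp n) = 1 := by
  ext i j
  simp only [T, Matrix.of_apply, Matrix.one_apply]
  by_cases h : i = j
  · subst h; simp [Matrix.one_apply]
  · rw [if_neg h]
    obtain ⟨x, hx⟩ := Function.ne_iff.mp h
    exact Finset.prod_eq_zero (Finset.mem_univ x) (by simp [Matrix.one_apply, hx])

lemma site_eq_T {n : ℕ} (x : Fin n) (a : M2) :
    site x a = T (Function.update (fun _ => (1:M2)) x a) := by
  ext i j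
  simp only [site, T, Matrix.of_apply]
  rw [← Finset.mul_prod_erase Finset.univ _ (Finset.mem_univ x)]
  congr 1
  · simp
  · rw [show Finset.univ.filter (fun y => y ≠ x) = Finset.univ.erase x by
      ext y; simp [Finset.mem_erase]]
    exact Finset.prod_congr rfl fun y hy => by
      rw [Function.update_of_ne (Finset.mem_erase.mp hy).1]
      simp [Matrix.one_apply]

lemma site_one {n : ℕ} (x : Fin n) : site x 1 = 1 := by
  rw [site_eq_T]
  rw [show Function.update (fun _ => (1:M2)) x 1 = fun _ => 1 by
    funext y; by_cases h : y = x <;> simp [h]]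
  exact T_one

lemma site_zero {n : ℕ} (x : Fin n) : site x 0 = 0 := by
  ext i j; simp [site]

lemma site_sub {n : ℕ} (x : Fin n) (a b : M2) :
    site x (a - b) = site x a - site x b := by
  ext i j; simp [site, sub_mul]

lemma site_add {n : ℕ} (x : Fin n) (a b : M2) :
    site x (a + b) = site x a + site x b := by
  ext i j; simp [site, add_mul]

lemma site_neg {n : ℕ} (x : Fin n) (a : M2) : site x (-a) = -site x a := by
  ext i j; simp [site]

lemma site_smul {n : ℕ} (x : Fin n) (c : ℂ) (a : M2) :
    site x (c • a) = c • site x a := by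
  ext i j; simp [site, mul_assoc]

lemma site_mul_same {n : ℕ} (x : Fin n) (a b : M2) :
    site x a * site x b = site x (a * b) := by
  rw [site_eq_T, site_eq_T, site_eq_T, T_mul]
  refine congrArg T (funext fun y => ?_)
  by_cases h : y = x
  · subst h; simp
  · simp [Function.update_of_ne h]

lemma site_commute {n : ℕ} {x y : Fin n} (h : x ≠ y) (a b : M2) :
    Commute (site x a) (site y b) := by
  show _ * _ = _ * _
  rw [site_eq_T, site_eq_T, T_mul, T_mul]
  refine congrArg T (funext fun z => ?_)
  by_cases hx : z = x
  · subst hx; rw [Function.update_self, Function.update_of_ne h, one_mul, mul_one]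
  · by_cases hy : z = y
    · subst hy; rw [Function.update_self, Function.update_of_ne (Ne.symm h), one_mul, mul_one]
    · simp [Function.update_of_ne hx, Function.update_of_ne hy]

/-- Commutator of a single-site operator with a two-site product. -/
lemma comm_pair {n : ℕ} {x y : Fin n} (h : x ≠ y) (a b c : M2) :
    site x c * (site x a * site y b) - (site x a * site y b) * site x c
      = site x (c * a - a * c) * site y b := by
  rw [← mul_assoc, site_mul_same x c a, mul_assoc (site x a),
    (site_commute h.symm b c).eq, ← mul_assoc, site_mul_same x a c, site_sub, sub_mul]

/-! ### Generating the whole matrix algebra from single-site operators -/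

lemma T_mem {n : ℕ} (A : Subalgebra ℂ (ChainOp n)) (f : Fin n → M2)
    (hf : ∀ x, site x (f x) ∈ A) : T f ∈ A := by
  have key : ∀ s : Finset (Fin n), T (fun y => if y ∈ s then f y else 1) ∈ A := by
    intro s
    induction s using Finset.induction with
    | empty =>
      rw [show (fun y : Fin n => if y ∈ (∅ : Finset (Fin n)) then f y else 1)
          = fun _ => (1:M2) from funext fun y => by simp, T_one]
      exact A.one_mem
    | @insert x s hx ih =>
      have : T (fun y => if y ∈ insert x s then f y else 1)
          = site x (f x) * T (fun y => if y ∈ s then f y else 1) := by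
        rw [site_eq_T, T_mul]
        refine congrArg T (funext fun y => ?_)
        by_cases h : y = x
        · subst h; simp [hx]
        · simp [Function.update_of_ne h, Finset.mem_insert, h]
      rw [this]
      exact A.mul_mem (hf x) ih
  have := key Finset.univ
  rwa [show (fun y : Fin n => if y ∈ (Finset.univ : Finset (Fin n)) then f y else 1) = f
    from funext fun y => by simp] at this

lemma stdBasisMatrix_eq_T {n : ℕ} (i j : Fin n → Fin 2) :
    Matrix.single i j (1:ℂ) = T (fun x => Matrix.single (i x) (j x) (1:ℂ)) := by
  ext a b
  simp only [T, Matrix.of_apply, Matrix.single, Matrix.of_apply]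
  by_cases h : i = a ∧ j = b
  · obtain ⟨rfl, rfl⟩ := h
    simp
  · rw [if_neg h]
    have hex : ∃ x, ¬(i x = a x ∧ j x = b x) := by
      by_contra hc
      push_neg at hc
      exact h ⟨funext fun x => (hc x).1, funext fun x => (hc x).2⟩
    obtain ⟨x, hx⟩ := hex
    exact (Finset.prod_eq_zero (Finset.mem_univ x)
      (show (if i x = a x ∧ j x = b x then (1:ℂ) else 0) = 0 from if_neg hx)).symm

/-- The four 2×2 matrix units in terms of `σp`, `σm`. -/
lemma site_stdBasis_mem {n : ℕ} (A : Subalgebra ℂ (ChainOp n)) (x : Fin n)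
    (hp : site x σp ∈ A) (hm : site x σm ∈ A) (a b : Fin 2) :
    site x (Matrix.single a b (1:ℂ)) ∈ A := by
  have e00 : Matrix.single (0:Fin 2) (0:Fin 2) (1:ℂ) = σp * σm := by
    rw [σp_eq, σm_eq]; ext i j; fin_cases i <;> fin_cases j <;>
      norm_num [Matrix.mul_apply, Fin.sum_univ_two, Matrix.single]
  have e01 : Matrix.single (0:Fin 2) (1:Fin 2) (1:ℂ) = σp := by
    rw [σp_eq]; ext i j; fin_cases i <;> fin_cases j <;>
      norm_num [Matrix.single]
  have e10 : Matrix.single (1:Fin 2) (0:Fin 2) (1:ℂ) = σm := by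
    rw [σm_eq]; ext i j; fin_cases i <;> fin_cases j <;>
      norm_num [Matrix.single]
  have e11 : Matrix.single (1:Fin 2) (1:Fin 2) (1:ℂ) = σm * σp := by
    rw [σp_eq, σm_eq]; ext i j; fin_cases i <;> fin_cases j <;>
      norm_num [Matrix.mul_apply, Fin.sum_univ_two, Matrix.single]
  fin_cases a <;> fin_cases b
  · show site x (Matrix.single 0 0 (1:ℂ)) ∈ A
    rw [e00, ← site_mul_same]; exact A.mul_mem hp hm
  · show site x (Matrix.single 0 1 (1:ℂ)) ∈ A
    rw [e01]; exact hp
  · show site x (Matrix.single 1 0 (1:ℂ)) ∈ A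
    rw [e10]; exact hm
  · show site x (Matrix.single 1 1 (1:ℂ)) ∈ A
    rw [e11, ← site_mul_same]; exact A.mul_mem hm hp

/-- If a subalgebra contains `σ⁺` and `σ⁻` at every site, it is everything. -/
lemma top_of_sites {n : ℕ} (A : Subalgebra ℂ (ChainOp n))
    (hp : ∀ x, site x σp ∈ A) (hm : ∀ x, site x σm ∈ A) : A = ⊤ := by
  rw [eq_top_iff]
  rintro m -
  rw [matrix_eq_sum_single m]
  refine A.sum_mem fun i _ => A.sum_mem fun j _ => ?_
  have : Matrix.single i j (m i j) = (m i j) • Matrix.single i j (1:ℂ) := by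
    rw [smul_single, smul_eq_mul, mul_one]
  rw [this]
  refine A.smul_mem ?_ _
  rw [stdBasisMatrix_eq_T]
  exact T_mem A _ fun x => site_stdBasis_mem A x (hp x) (hm x) _ _

/-! ### The XXZ Hamiltonian and its tails -/

/-- The bond term `h_{x,x+1}`. -/
def bond (Δ : ℂ) {n : ℕ} (x : Fin n) (h : (x:ℕ) + 1 < n) : ChainOp n :=
  (2:ℂ) • (site x σp * site ⟨(x:ℕ)+1, h⟩ σm) + (2:ℂ) • (site x σm * site ⟨(x:ℕ)+1, h⟩ σp)
    + Δ • (site x σz * site ⟨(x:ℕ)+1, h⟩ σz)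

/-- The tail `Σ_{x ≥ k} h_{x,x+1}` of the XXZ Hamiltonian. -/
def Rtail (Δ : ℂ) (n : ℕ) (k : ℕ) : ChainOp n :=
  ∑ x : Fin n, if h : k ≤ (x:ℕ) ∧ (x:ℕ) + 1 < n then bond Δ x h.2 else 0

lemma XXZ_eq_Rtail (Δ : ℂ) (n : ℕ) : XXZ Δ n = Rtail Δ n 0 := by
  refine Finset.sum_congr rfl fun x _ => ?_
  by_cases h : (x:ℕ) + 1 < n
  · rw [dif_pos h, dif_pos ⟨Nat.zero_le _, h⟩]; rfl
  · rw [dif_neg h, dif_neg (fun hc => h hc.2)]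

lemma Rtail_succ (Δ : ℂ) {n : ℕ} (k : ℕ) (hk : k < n) :
    Rtail Δ n k = (if h : k + 1 < n then bond Δ ⟨k, hk⟩ h else 0) + Rtail Δ n (k+1) := by
  unfold Rtail
  have ha := Finset.add_sum_erase Finset.univ
    (fun x : Fin n => if h : k ≤ (x:ℕ) ∧ (x:ℕ) + 1 < n then bond Δ x h.2 else 0)
    (Finset.mem_univ (⟨k, hk⟩ : Fin n))
  have hb := Finset.add_sum_erase Finset.univ
    (fun x : Fin n => if h : k + 1 ≤ (x:ℕ) ∧ (x:ℕ) + 1 < n then bond Δ x h.2 else 0)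
    (Finset.mem_univ (⟨k, hk⟩ : Fin n))
  rw [← ha, ← hb]
  beta_reduce
  have h1 : (if h : k ≤ ((⟨k, hk⟩ : Fin n) : ℕ) ∧ ((⟨k, hk⟩ : Fin n) : ℕ) + 1 < n
        then bond Δ (⟨k, hk⟩ : Fin n) h.2 else 0)
      = if h : k + 1 < n then bond Δ (⟨k, hk⟩ : Fin n) h else 0 := by
    by_cases h : k + 1 < n
    · rw [dif_pos ⟨le_refl k, h⟩, dif_pos h]
    · rw [dif_neg (fun hc => h hc.2), dif_neg h]
  have h2 : (if h : k + 1 ≤ ((⟨k, hk⟩ : Fin n) : ℕ) ∧ ((⟨k, hk⟩ : Fin n) : ℕ) + 1 < n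
        then bond Δ (⟨k, hk⟩ : Fin n) h.2 else 0) = (0 : ChainOp n) := by
    exact dif_neg (fun hc => Nat.not_succ_le_self k hc.1)
  rw [h1, h2, zero_add]
  congr 1
  refine Finset.sum_congr rfl fun x hx => ?_
  have hxk : (x:ℕ) ≠ k := fun hc => (Finset.mem_erase.mp hx).1 (Fin.ext hc)
  by_cases h : k + 1 ≤ (x:ℕ) ∧ (x:ℕ) + 1 < n
  · rw [dif_pos ⟨by omega, h.2⟩, dif_pos h]
  · rw [dif_neg (fun hc => h ⟨by omega, hc.2⟩), dif_neg h]

/-- A single-site operator at site `k` commutes with the tail starting at `k+1`. -/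
lemma site_commute_Rtail {n : ℕ} (Δ : ℂ) (k : ℕ) (hk : k < n) (a : M2) :
    Commute (site ⟨k, hk⟩ a) (Rtail Δ n (k+1)) := by
  refine Commute.sum_right _ _ _ fun x _ => ?_
  by_cases h : k + 1 ≤ (x:ℕ) ∧ (x:ℕ) + 1 < n
  · rw [dif_pos h]
    have hx : (⟨k, hk⟩ : Fin n) ≠ x := fun hc => by
      have : k = (x:ℕ) := congrArg Fin.val hc; omega
    have hx' : (⟨k, hk⟩ : Fin n) ≠ ⟨(x:ℕ)+1, h.2⟩ := fun hc => by
      have : k = (x:ℕ)+1 := congrArg Fin.val hc; omega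
    unfold bond
    exact ((((site_commute hx a σp).mul_right (site_commute hx' a σm)).smul_right
        _).add_right
      (((site_commute hx a σm).mul_right (site_commute hx' a σp)).smul_right _)).add_right
      (((site_commute hx a σz).mul_right (site_commute hx' a σz)).smul_right _)
  · rw [dif_neg h]; exact Commute.zero_right _

/-- The key commutator: `[σᶻ_k, Rtail k] = 4 (σ⁺_k σ⁻_{k+1} - σ⁻_k σ⁺_{k+1})`. -/
lemma comm_main {n : ℕ} (Δ : ℂ) (k : ℕ) (hk : k < n) (h2 : k + 1 < n) :
    site ⟨k, hk⟩ σz * Rtail Δ n k - Rtail Δ n k * site ⟨k, hk⟩ σz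
      = (4:ℂ) • (site ⟨k, hk⟩ σp * site ⟨k+1, h2⟩ σm
          - site ⟨k, hk⟩ σm * site ⟨k+1, h2⟩ σp) := by
  rw [Rtail_succ Δ k hk, dif_pos h2]
  have hne : (⟨k, hk⟩ : Fin n) ≠ ⟨k+1, h2⟩ := fun hc => by
    have : k = k+1 := congrArg Fin.val hc; omega
  have e1 := comm_pair hne σp σm σz
  have e2 := comm_pair hne σm σp σz
  have e3 := comm_pair hne σz σz σz
  rw [σzp_sub_σpz, site_smul] at e1
  rw [σzm_sub_σmz, site_neg, site_smul] at e2
  rw [σzz_comm, site_zero, zero_mul] at e3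
  set Z := site (⟨k, hk⟩ : Fin n) σz
  set R := Rtail Δ n (k+1)
  have hcomm : Z * R = R * Z := (site_commute_Rtail Δ k hk σz).eq
  unfold bond
  set P := site (⟨k, hk⟩ : Fin n) σp
  set M := site (⟨k, hk⟩ : Fin n) σm
  set P' := site (⟨k+1, h2⟩ : Fin n) σp
  set M' := site (⟨k+1, h2⟩ : Fin n) σm
  set ZZ := site (⟨k+1, h2⟩ : Fin n) σz
  have expand :
      Z * ((2:ℂ) • (P * M') + (2:ℂ) • (M * P') + Δ • (Z * ZZ) + R)
        - ((2:ℂ) • (P * M') + (2:ℂ) • (M * P') + Δ • (Z * ZZ) + R) * Z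
      = (2:ℂ) • (Z * (P * M') - (P * M') * Z) + (2:ℂ) • (Z * (M * P') - (M * P') * Z)
        + Δ • (Z * (Z * ZZ) - (Z * ZZ) * Z) + (Z * R - R * Z) := by
    simp only [mul_add, add_mul, mul_smul_comm, smul_mul_assoc, smul_sub]
    abel
  rw [expand, e1, e2, e3, hcomm, sub_self, add_zero, smul_zero, add_zero,
    neg_mul, smul_mul_assoc, smul_mul_assoc]
  module

/-! ### The main induction -/

lemma main_induction (Δ : ℂ) (n : ℕ) (h0 : 0 < n) :
    ∀ k : ℕ, ∀ hk : k < n,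
      site (⟨k, hk⟩ : Fin n) σp ∈ Algebra.adjoin ℂ
          ({XXZ Δ n, site (⟨0, h0⟩ : Fin n) σp, site (⟨0, h0⟩ : Fin n) σm} : Set (ChainOp n))
      ∧ site (⟨k, hk⟩ : Fin n) σm ∈ Algebra.adjoin ℂ
          ({XXZ Δ n, site (⟨0, h0⟩ : Fin n) σp, site (⟨0, h0⟩ : Fin n) σm} : Set (ChainOp n))
      ∧ Rtail Δ n k ∈ Algebra.adjoin ℂ
          ({XXZ Δ n, site (⟨0, h0⟩ : Fin n) σp, site (⟨0, h0⟩ : Fin n) σm} : Set (ChainOp n)) := by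
  set A := Algebra.adjoin ℂ
      ({XXZ Δ n, site (⟨0, h0⟩ : Fin n) σp, site (⟨0, h0⟩ : Fin n) σm} : Set (ChainOp n)) with hA
  have hH : XXZ Δ n ∈ A := Algebra.subset_adjoin (by simp)
  have hp0 : site (⟨0, h0⟩ : Fin n) σp ∈ A := Algebra.subset_adjoin (by simp)
  have hm0 : site (⟨0, h0⟩ : Fin n) σm ∈ A := Algebra.subset_adjoin (by simp)
  intro k
  induction k with
  | zero =>
    intro hk
    exact ⟨hp0, hm0, by rw [← XXZ_eq_Rtail]; exact hH⟩
  | succ k ih =>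
    intro hk
    have hk' : k < n := by omega
    obtain ⟨hp, hm, hR⟩ := ih hk'
    have hz : site (⟨k, hk'⟩ : Fin n) σz ∈ A := by
      rw [← σpm_sub_σmp, site_sub, ← site_mul_same, ← site_mul_same]
      exact A.sub_mem (A.mul_mem hp hm) (A.mul_mem hm hp)
    have hC : site (⟨k, hk'⟩ : Fin n) σz * Rtail Δ n k
        - Rtail Δ n k * site (⟨k, hk'⟩ : Fin n) σz ∈ A :=
      A.sub_mem (A.mul_mem hz hR) (A.mul_mem hR hz)
    rw [comm_main Δ k hk' hk] at hC
    set P := site (⟨k, hk'⟩ : Fin n) σp with hPdef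
    set M := site (⟨k, hk'⟩ : Fin n) σm with hMdef
    set P' := site (⟨k+1, hk⟩ : Fin n) σp with hP'def
    set M' := site (⟨k+1, hk⟩ : Fin n) σm with hM'def
    have hK : P * M' - M * P' ∈ A := by
      have := A.smul_mem hC (4⁻¹ : ℂ)
      rwa [smul_smul, show ((4:ℂ)⁻¹ * 4) = 1 by norm_num, one_smul] at this
    set K := P * M' - M * P' with hKdef
    have hne : (⟨k, hk'⟩ : Fin n) ≠ ⟨k+1, hk⟩ := fun hc => by
      have : k = k+1 := congrArg Fin.val hc; omega
    have hP' : P' ∈ A := by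
      have h1 : P * K = -(site (⟨k, hk'⟩ : Fin n) (σp * σm) * P') := by
        rw [hKdef, mul_sub, ← mul_assoc, hPdef, site_mul_same, σpp, site_zero, zero_mul,
          zero_sub, ← mul_assoc, site_mul_same]
      have h2 : K * P = -(site (⟨k, hk'⟩ : Fin n) (σm * σp) * P') := by
        rw [hKdef, sub_mul]
        have e1 : P * M' * P = 0 := by
          rw [mul_assoc, hPdef, hM'def, (site_commute hne.symm σm σp).eq, ← mul_assoc,
            site_mul_same, σpp, site_zero, zero_mul]
        have e2 : M * P' * P = site (⟨k, hk'⟩ : Fin n) (σm * σp) * P' := by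
          rw [mul_assoc, hPdef, hP'def, (site_commute hne.symm σp σp).eq, ← mul_assoc,
            hMdef, site_mul_same]
        rw [e1, e2, zero_sub]
      have key : P' = -(P * K + K * P) := by
        rw [h1, h2, ← neg_add, ← add_mul, ← site_add, σpm_add_σmp, site_one, one_mul,
          neg_neg]
      rw [key]
      exact A.neg_mem (A.add_mem (A.mul_mem hp hK) (A.mul_mem hK hp))
    have hM' : M' ∈ A := by
      have h1 : M * K = site (⟨k, hk'⟩ : Fin n) (σm * σp) * M' := by
        rw [hKdef, mul_sub, ← mul_assoc, hMdef, site_mul_same, ← mul_assoc, site_mul_same,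
          σmm, site_zero, zero_mul, sub_zero]
      have h2 : K * M = site (⟨k, hk'⟩ : Fin n) (σp * σm) * M' := by
        rw [hKdef, sub_mul]
        have e1 : P * M' * M = site (⟨k, hk'⟩ : Fin n) (σp * σm) * M' := by
          rw [mul_assoc, hMdef, hM'def, (site_commute hne.symm σm σm).eq, ← mul_assoc,
            hPdef, site_mul_same]
        have e2 : M * P' * M = 0 := by
          rw [mul_assoc, hMdef, hP'def, (site_commute hne.symm σp σm).eq, ← mul_assoc,
            site_mul_same, σmm, site_zero, zero_mul]
        rw [e1, e2, sub_zero]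
      have key : M' = M * K + K * M := by
        rw [h1, h2, ← add_mul, ← site_add,
          show σm * σp + σp * σm = 1 from by rw [add_comm]; exact σpm_add_σmp,
          site_one, one_mul]
      rw [key]
      exact A.add_mem (A.mul_mem hm hK) (A.mul_mem hK hm)
    have hz' : site (⟨k+1, hk⟩ : Fin n) σz ∈ A := by
      rw [← σpm_sub_σmp, site_sub, ← site_mul_same, ← site_mul_same]
      exact A.sub_mem (A.mul_mem hP' hM') (A.mul_mem hM' hP')
    have hbond : bond Δ (⟨k, hk'⟩ : Fin n) hk ∈ A := by
      unfold bond
      exact A.add_mem (A.add_mem (A.smul_mem (A.mul_mem hp hM') _)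
        (A.smul_mem (A.mul_mem hm hP') _)) (A.smul_mem (A.mul_mem hz hz') _)
    have hR' : Rtail Δ n (k+1) ∈ A := by
      have hsucc := Rtail_succ Δ k hk'
      rw [dif_pos hk] at hsucc
      have heq : Rtail Δ n (k+1) = Rtail Δ n k - bond Δ (⟨k, hk'⟩ : Fin n) hk := by
        rw [hsucc]; abel
      rw [heq]
      exact A.sub_mem hR hbond
    exact ⟨hP', hM', hR'⟩

/-- the unital complex subalgebra generated by `H`, `σ⁺₁`, `σ⁻₁`
is the whole matrix algebra `End((ℂ²)^{⊗n})`. -/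
theorem stmt2 (n : ℕ) (hn : 1 ≤ n) (Δ : ℂ) :
    Algebra.adjoin ℂ
      ({XXZ Δ n, site (⟨0, by omega⟩ : Fin n) σp, site (⟨0, by omega⟩ : Fin n) σm} :
        Set (ChainOp n)) = ⊤ := by
  have h0 : 0 < n := hn
  refine top_of_sites _ (fun x => ?_) (fun x => ?_)
  · have := (main_induction Δ n h0 x.val x.isLt).1
    simpa using this
  · have := (main_induction Δ n h0 x.val x.isLt).2.1
    simpa using this

end
end

section
/- Let n ≥ 2 and let H = Σ_{x=1}^{n−1} (2σ⁺ₓσ⁻_{x+1} + 2σ⁻ₓσ⁺_{x+1} + σᶻₓσᶻ_{x+1}) be the open isotropic Heisenberg (XXX) Hamiltonian on (ℂ²)^{⊗n}. Define Z = Σ_{1 ≤ x < y ≤ n} σ⁺ₓ σ⁻_y. Then [H, Z] = −σᶻ₁ + σᶻₙ. -/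
open Matrix

noncomputable section

-- machinery
def kron {n : ℕ} (m : Fin n → M2) : ChainOp n :=
  Matrix.of fun i j => ∏ w, m w (i w) (j w)

lemma kron_mul {n : ℕ} (m m' : Fin n → M2) :
    kron m * kron m' = kron (fun w => m w * m' w) := by
  ext i j
  simp only [kron, Matrix.mul_apply, Matrix.of_apply]
  rw [Finset.prod_univ_sum, Fintype.piFinset_univ]
  apply Finset.sum_congr rfl
  intro k _
  rw [← Finset.prod_mul_distrib]

lemma site_eq_kron {n : ℕ} (x : Fin n) (a : M2) :
    site x a = kron (Function.update (fun _ => (1:M2)) x a) := by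
  ext i j
  simp only [site, kron, Matrix.of_apply]
  rw [← Finset.prod_erase_mul _ _ (Finset.mem_univ x)]
  rw [Function.update_self]
  rw [mul_comm]
  congr 1
  rw [show Finset.univ.filter (fun y => y ≠ x) = Finset.univ.erase x from by
    ext w; simp [Finset.mem_erase, and_comm]]
  apply Finset.prod_congr rfl
  intro w hw
  rw [Function.update_of_ne (Finset.mem_erase.mp hw).1]
  simp [Matrix.one_apply]

def u2 {n : ℕ} (x y : Fin n) (a b : M2) : Fin n → M2 :=
  Function.update (Function.update (fun _ => (1:M2)) x a) y b

lemma u2_mul {n : ℕ} (x y : Fin n) (hxy : x ≠ y) (a b c d : M2) :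
    (fun w => u2 x y a b w * u2 x y c d w) = u2 x y (a*c) (b*d) := by
  funext w
  rcases eq_or_ne w y with rfl | hwy
  · simp [u2]
  · rcases eq_or_ne w x with rfl | hwx
    · simp [u2, Function.update_of_ne hwy, hxy]
    · simp [u2, Function.update_of_ne hwy, Function.update_of_ne hwx]

lemma site_u2_left {n : ℕ} (x y : Fin n) (hxy : x ≠ y) (a : M2) :
    site x a = kron (u2 x y a 1) := by
  rw [site_eq_kron]
  have : Function.update (fun _ => (1:M2)) x a = u2 x y a 1 := by
    funext w
    rcases eq_or_ne w y with rfl | hwy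
    · simp [u2, Function.update_of_ne (Ne.symm hxy)]
    · simp [u2, Function.update_of_ne hwy]
  rw [this]

lemma site_u2_right {n : ℕ} (x y : Fin n) (hxy : x ≠ y) (b : M2) :
    site y b = kron (u2 x y 1 b) := by
  rw [site_eq_kron]
  have : Function.update (fun _ => (1:M2)) y b = u2 x y 1 b := by
    funext w
    rcases eq_or_ne w y with rfl | hwy
    · simp [u2]
    · rcases eq_or_ne w x with rfl | hwx
      · simp [u2, Function.update_of_ne hwy]
      · simp [u2, Function.update_of_ne hwy, Function.update_of_ne hwx]
  rw [this]

lemma kron_u2_apply {n : ℕ} (x y : Fin n) (hxy : x ≠ y) (a b : M2)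
    (i j : Fin n → Fin 2) :
    kron (u2 x y a b) i j
      = a (i x) (j x) * b (i y) (j y) *
        ∏ w ∈ (Finset.univ.erase x).erase y, (if i w = j w then (1:ℂ) else 0) := by
  simp only [kron, Matrix.of_apply]
  rw [← Finset.prod_erase_mul _ _ (Finset.mem_univ x),
      ← Finset.prod_erase_mul _ _ (Finset.mem_erase.mpr ⟨Ne.symm hxy, Finset.mem_univ y⟩)]
  have h1 : u2 x y a b x = a := by
    simp [u2, Function.update_of_ne hxy]
  have h2 : u2 x y a b y = b := by simp [u2]
  rw [h1, h2]
  have : ∀ w ∈ (Finset.univ.erase x).erase y,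
      u2 x y a b w (i w) (j w) = (if i w = j w then (1:ℂ) else 0) := by
    intro w hw
    rcases Finset.mem_erase.mp hw with ⟨hwy, hw2⟩
    rcases Finset.mem_erase.mp hw2 with ⟨hwx, -⟩
    simp [u2, Function.update_of_ne hwy, Function.update_of_ne hwx, Matrix.one_apply]
  rw [Finset.prod_congr rfl this]
  ring

lemma site_comm {n : ℕ} (x y : Fin n) (hxy : x ≠ y) (a b : M2) :
    site x a * site y b = site y b * site x a := by
  rw [site_u2_left x y hxy a, site_u2_right x y hxy b, kron_mul, kron_mul,
      u2_mul x y hxy, u2_mul x y hxy]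
  simp

lemma site_pair {n : ℕ} (x y : Fin n) (hxy : x ≠ y) (a b : M2) :
    site x a * site y b = kron (u2 x y a b) := by
  rw [site_u2_left x y hxy a, site_u2_right x y hxy b, kron_mul, u2_mul x y hxy]
  simp

def hloc {n : ℕ} (x y : Fin n) : ChainOp n :=
  (2:ℂ) • (site x σp * site y σm) + (2:ℂ) • (site x σm * site y σp)
    + site x σz * site y σz

lemma idC {n : ℕ} (x y : Fin n) (hxy : x ≠ y) :
    hloc x y * (site x σp * site y σm) - (site x σp * site y σm) * hloc x y
      = site y σz - site x σz := by
  simp only [hloc, site_pair x y hxy, site_u2_left x y hxy, site_u2_right x y hxy]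
  simp only [add_mul, mul_add, smul_mul_assoc, mul_smul_comm, kron_mul, u2_mul x y hxy]
  ext i j
  simp only [Matrix.sub_apply, Matrix.add_apply, Matrix.smul_apply, smul_eq_mul,
    kron_u2_apply x y hxy]
  generalize i x = p
  generalize j x = q
  generalize i y = r
  generalize j y = s
  generalize (∏ w ∈ (Finset.univ.erase x).erase y, (if i w = j w then (1:ℂ) else 0)) = D
  fin_cases p <;> fin_cases q <;> fin_cases r <;> fin_cases s <;>
    simp [σp_eq, σm_eq, σz, Matrix.mul_apply, Fin.sum_univ_two, Matrix.one_apply] <;> ring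

lemma idA {n : ℕ} (x y : Fin n) (hxy : x ≠ y) :
    hloc x y * (site x σm + site y σm) = (site x σm + site y σm) * hloc x y := by
  simp only [hloc, site_pair x y hxy, site_u2_left x y hxy, site_u2_right x y hxy]
  simp only [add_mul, mul_add, smul_mul_assoc, mul_smul_comm, kron_mul, u2_mul x y hxy]
  ext i j
  simp only [Matrix.add_apply, Matrix.smul_apply, smul_eq_mul, kron_u2_apply x y hxy]
  generalize i x = p
  generalize j x = q
  generalize i y = r
  generalize j y = s
  generalize (∏ w ∈ (Finset.univ.erase x).erase y, (if i w = j w then (1:ℂ) else 0)) = D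
  fin_cases p <;> fin_cases q <;> fin_cases r <;> fin_cases s <;>
    simp [σp_eq, σm_eq, σz, Matrix.mul_apply, Fin.sum_univ_two, Matrix.one_apply] <;> ring

lemma idB {n : ℕ} (x y : Fin n) (hxy : x ≠ y) :
    hloc x y * (site x σp + site y σp) = (site x σp + site y σp) * hloc x y := by
  simp only [hloc, site_pair x y hxy, site_u2_left x y hxy, site_u2_right x y hxy]
  simp only [add_mul, mul_add, smul_mul_assoc, mul_smul_comm, kron_mul, u2_mul x y hxy]
  ext i j
  simp only [Matrix.add_apply, Matrix.smul_apply, smul_eq_mul, kron_u2_apply x y hxy]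
  generalize i x = p
  generalize j x = q
  generalize i y = r
  generalize j y = s
  generalize (∏ w ∈ (Finset.univ.erase x).erase y, (if i w = j w then (1:ℂ) else 0)) = D
  fin_cases p <;> fin_cases q <;> fin_cases r <;> fin_cases s <;>
    simp [σp_eq, σm_eq, σz, Matrix.mul_apply, Fin.sum_univ_two, Matrix.one_apply] <;> ring

lemma idD {n : ℕ} (x y : Fin n) (w : Fin n) (hwx : w ≠ x) (hwy : w ≠ y) (c : M2) :
    hloc x y * site w c = site w c * hloc x y := by
  have key : ∀ a b : M2, (site x a * site y b) * site w c = site w c * (site x a * site y b) := by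
    intro a b
    rw [mul_assoc, site_comm y w (Ne.symm hwy), ← mul_assoc, site_comm x w (Ne.symm hwx),
      mul_assoc]
  simp only [hloc, add_mul, mul_add, smul_mul_assoc, mul_smul_comm, key]

lemma comm0 {n : ℕ} (x x' y z : Fin n) (h1 : y ≠ x) (h2 : y ≠ x') (h3 : z ≠ x) (h4 : z ≠ x') :
    hloc x x' * (site y σp * site z σm) = (site y σp * site z σm) * hloc x x' := by
  rw [← mul_assoc, idD x x' y h1 h2, mul_assoc, idD x x' z h3 h4, ← mul_assoc]

lemma cancelA {n : ℕ} (x x' y : Fin n) (hxx' : x ≠ x') (h1 : y ≠ x) (h2 : y ≠ x') :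
    hloc x x' * (site y σp * site x' σm) - (site y σp * site x' σm) * hloc x x'
      = -(hloc x x' * (site y σp * site x σm) - (site y σp * site x σm) * hloc x x') := by
  have hc : hloc x x' * (site y σp * (site x σm + site x' σm))
      = (site y σp * (site x σm + site x' σm)) * hloc x x' := by
    rw [← mul_assoc, idD x x' y h1 h2, mul_assoc, idA x x' hxx', ← mul_assoc]
  simp only [mul_add, add_mul] at hc
  rw [eq_neg_iff_add_eq_zero, sub_add_sub_comm, sub_eq_zero]
  exact (add_comm _ _).trans (hc.trans (add_comm _ _))

lemma cancelB {n : ℕ} (x x' z : Fin n) (hxx' : x ≠ x') (h3 : z ≠ x) (h4 : z ≠ x') :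
    hloc x x' * (site x' σp * site z σm) - (site x' σp * site z σm) * hloc x x'
      = -(hloc x x' * (site x σp * site z σm) - (site x σp * site z σm) * hloc x x') := by
  have hc : hloc x x' * ((site x σp + site x' σp) * site z σm)
      = ((site x σp + site x' σp) * site z σm) * hloc x x' := by
    rw [← mul_assoc, idB x x' hxx', mul_assoc, idD x x' z h3 h4, ← mul_assoc]
  simp only [mul_add, add_mul] at hc
  rw [eq_neg_iff_add_eq_zero, sub_add_sub_comm, sub_eq_zero]
  exact (add_comm _ _).trans (hc.trans (add_comm _ _))

lemma pointwise {n : ℕ} (x x' : Fin n) (hx : (x:ℕ)+1 = (x':ℕ)) (y z : Fin n) :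
    hloc x x' * (if y < z then site y σp * site z σm else 0)
      - (if y < z then site y σp * site z σm else 0) * hloc x x'
    = (if z = x then (if y < x then
          hloc x x' * (site y σp * site x σm) - (site y σp * site x σm) * hloc x x' else 0) else 0)
      - (if z = x' then (if y < x then
          hloc x x' * (site y σp * site x σm) - (site y σp * site x σm) * hloc x x' else 0) else 0)
      + (if y = x then (if x' < z then
          hloc x x' * (site x σp * site z σm) - (site x σp * site z σm) * hloc x x' else 0) else 0)
      - (if y = x' then (if x' < z then
          hloc x x' * (site x σp * site z σm) - (site x σp * site z σm) * hloc x x' else 0) else 0)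
      + (if y = x then (if z = x' then site x' σz - site x σz else 0) else 0) := by
  have hxx' : x ≠ x' := fun h => by subst h; omega
  have L : ∀ {a b : Fin n}, (a:ℕ) < (b:ℕ) → a < b := fun h => h
  rcases lt_trichotomy y x with hy | hy | hy
  · -- y < x
    have hyv : (y:ℕ) < (x:ℕ) := hy
    have hyx : y ≠ x := ne_of_lt hy
    have hyx' : y ≠ x' := fun h => by subst h; omega
    rcases lt_trichotomy z x with hz | hz | hz
    · -- z < x : all zero
      have hzv : (z:ℕ) < (x:ℕ) := hz
      have hzx : z ≠ x := ne_of_lt hz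
      have hzx' : z ≠ x' := fun h => by subst h; omega
      simp only [if_neg hzx, if_neg hzx', if_neg hyx, if_neg hyx']
      by_cases hyz : y < z
      · rw [if_pos hyz, comm0 x x' y z hyx hyx' hzx hzx', sub_self]; simp
      · rw [if_neg hyz]; simp
    · -- z = x : gives A y
      rw [hz]
      simp only [if_pos hy, eq_self_iff_true, if_true, if_neg hxx', if_neg hyx, if_neg hyx']
      simp
    · -- x < z
      have hzv : (x:ℕ) < (z:ℕ) := hz
      by_cases hzx' : z = x'
      · rw [hzx']
        simp only [if_pos (L (show (y:ℕ) < (x':ℕ) by omega)), if_neg (Ne.symm hxx'),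
          eq_self_iff_true, if_true, if_pos hy, if_neg hyx, if_neg hyx']
        simp only [zero_sub, add_zero, sub_zero, zero_add]
        exact cancelA x x' y hxx' hyx hyx'
      · have hzv' : (x':ℕ) < (z:ℕ) := by omega
        have hzx : z ≠ x := fun h => by subst h; omega
        simp only [if_pos (L (show (y:ℕ) < (z:ℕ) by omega)), if_neg hzx, if_neg hzx',
          if_neg hyx, if_neg hyx']
        rw [comm0 x x' y z hyx hyx' hzx hzx', sub_self]; simp
  · -- y = x
    rw [hy]
    by_cases hzx' : z = x'
    · rw [hzx']
      simp only [if_pos (L (show (x:ℕ) < (x':ℕ) by omega)), if_neg (Ne.symm hxx'),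
        eq_self_iff_true, if_true, if_neg (lt_irrefl x), if_neg (lt_irrefl x'),
        if_neg hxx', ite_self]
      simp only [add_zero, zero_add, sub_zero, zero_sub, neg_zero]
      exact idC x x' hxx'
    · rcases lt_or_ge (x:ℕ) (z:ℕ) with hz | hz
      · have hzv' : (x':ℕ) < (z:ℕ) := by omega
        have hzx : z ≠ x := fun h => by subst h; omega
        simp only [if_pos (L hz), if_neg hzx, if_neg hzx', eq_self_iff_true, if_true,
          if_pos (L hzv'), if_neg hxx']
        simp
      · have hnlt : ¬ x < z := fun h => by have : (x:ℕ) < (z:ℕ) := h; omega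
        have hnlt' : ¬ x' < z := fun h => by have : (x':ℕ) < (z:ℕ) := h; omega
        simp only [if_neg hnlt, if_neg (lt_irrefl x), if_neg hnlt', if_neg hxx',
          if_neg hzx', ite_self, eq_self_iff_true, if_true]
        simp
  · -- x < y
    have hyv : (x:ℕ) < (y:ℕ) := hy
    have hyx : y ≠ x := fun h => by subst h; omega
    by_cases hyx' : y = x'
    · rw [hyx']
      by_cases hz : x' < z
      · have hzv : (x':ℕ) < (z:ℕ) := hz
        have hzx : z ≠ x := fun h => by subst h; omega
        have hzx' : z ≠ x' := fun h => by subst h; omega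
        simp only [if_pos hz, if_neg hzx, if_neg hzx', if_neg (Ne.symm hxx'),
          eq_self_iff_true, if_true]
        simp only [zero_sub, zero_add, add_zero, sub_zero]
        exact cancelB x x' z hxx' hzx hzx'
      · have hnlt : ¬ x' < x := fun h => by have : (x':ℕ) < (x:ℕ) := h; omega
        simp only [if_neg hz, if_neg hnlt, if_neg (Ne.symm hxx'), eq_self_iff_true,
          if_true, ite_self]
        simp
    · -- x' < y
      have hyv' : (x':ℕ) < (y:ℕ) := by omega
      have hnyx : ¬ y < x := fun h => by have : (y:ℕ) < (x:ℕ) := h; omega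
      by_cases hyz : y < z
      · have hzv : (y:ℕ) < (z:ℕ) := hyz
        have hzx : z ≠ x := fun h => by subst h; omega
        have hzx' : z ≠ x' := fun h => by subst h; omega
        simp only [if_pos hyz, if_neg hzx, if_neg hzx', if_neg hyx, if_neg hyx']
        rw [comm0 x x' y z hyx hyx' hzx hzx', sub_self]; simp
      · simp only [if_neg hyz, if_neg hnyx, if_neg hyx, if_neg hyx', ite_self]
        simp

lemma bond_s12 {n : ℕ} (x x' : Fin n) (hx : (x:ℕ)+1 = (x':ℕ)) :
    hloc x x' * (∑ y : Fin n, ∑ z : Fin n, if y < z then site y σp * site z σm else 0)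
      - (∑ y : Fin n, ∑ z : Fin n, if y < z then site y σp * site z σm else 0) * hloc x x'
    = site x' σz - site x σz := by
  simp only [Finset.mul_sum, Finset.sum_mul, ← Finset.sum_sub_distrib]
  rw [Finset.sum_congr rfl (fun y _ => Finset.sum_congr rfl (fun z _ => pointwise x x' hx y z))]
  simp only [Finset.sum_add_distrib, Finset.sum_sub_distrib]
  have e1 : ∀ (C : Fin n → ChainOp n) (c : Fin n),
      (∑ y : Fin n, ∑ z : Fin n, if z = c then C y else 0) = ∑ y : Fin n, C y := by
    intro C c
    apply Finset.sum_congr rfl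
    intro y _
    simp [Finset.sum_ite_eq']
  have e2 : ∀ (C : Fin n → ChainOp n) (c : Fin n),
      (∑ y : Fin n, ∑ z : Fin n, if y = c then C z else 0) = ∑ z : Fin n, C z := by
    intro C c
    rw [Finset.sum_comm]
    apply Finset.sum_congr rfl
    intro z _
    simp [Finset.sum_ite_eq']
  rw [e1 (fun y => if y < x then
        hloc x x' * (site y σp * site x σm) - (site y σp * site x σm) * hloc x x' else 0) x,
      e1 (fun y => if y < x then
        hloc x x' * (site y σp * site x σm) - (site y σp * site x σm) * hloc x x' else 0) x',
      e2 (fun z => if x' < z then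
        hloc x x' * (site x σp * site z σm) - (site x σp * site z σm) * hloc x x' else 0) x,
      e2 (fun z => if x' < z then
        hloc x x' * (site x σp * site z σm) - (site x σp * site z σm) * hloc x x' else 0) x',
      e2 (fun z => if z = x' then site x' σz - site x σz else 0) x]
  simp [Finset.sum_ite_eq']

/-- for the open XXX chain (`Δ = 1`), the operator
`Z = Σ_{x<y} σ⁺ₓ σ⁻_y` satisfies `[H,Z] = −σᶻ₁ + σᶻₙ`. -/
theorem stmt12 (n : ℕ) (hn : 2 ≤ n)
    (Z : ChainOp n)
    (hZ : Z = ∑ x : Fin n, ∑ y : Fin n, if x < y then site x σp * site y σm else 0) :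
    XXZ 1 n * Z - Z * XXZ 1 n
      = -(site (⟨0, by omega⟩ : Fin n) σz) + site (⟨n-1, by omega⟩ : Fin n) σz := by
  subst hZ
  unfold XXZ
  rw [Finset.sum_mul, Finset.mul_sum, ← Finset.sum_sub_distrib]
  have step : ∀ x : Fin n,
      (if h : (x:ℕ)+1 < n then
        (2:ℂ) • (site x σp * site ⟨(x:ℕ)+1, h⟩ σm) + (2:ℂ) • (site x σm * site ⟨(x:ℕ)+1, h⟩ σp)
          + (1:ℂ) • (site x σz * site ⟨(x:ℕ)+1, h⟩ σz) else 0)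
        * (∑ y : Fin n, ∑ z : Fin n, if y < z then site y σp * site z σm else 0)
      - (∑ y : Fin n, ∑ z : Fin n, if y < z then site y σp * site z σm else 0)
        * (if h : (x:ℕ)+1 < n then
          (2:ℂ) • (site x σp * site ⟨(x:ℕ)+1, h⟩ σm) + (2:ℂ) • (site x σm * site ⟨(x:ℕ)+1, h⟩ σp)
            + (1:ℂ) • (site x σz * site ⟨(x:ℕ)+1, h⟩ σz) else 0)
      = if h : (x:ℕ)+1 < n then site (⟨(x:ℕ)+1, h⟩ : Fin n) σz - site x σz else 0 := by
    intro x
    by_cases h : (x:ℕ)+1 < n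
    · rw [dif_pos h, dif_pos h, one_smul]
      exact bond_s12 x ⟨(x:ℕ)+1, h⟩ rfl
    · rw [dif_neg h, dif_neg h, zero_mul, mul_zero, sub_self]
  rw [Finset.sum_congr rfl (fun x _ => step x)]
  classical
  set G : ℕ → ChainOp n := fun k => if h : k < n then site (⟨k, h⟩ : Fin n) σz else 0 with hG
  have step2 : ∀ x : Fin n,
      (if h : (x:ℕ)+1 < n then site (⟨(x:ℕ)+1, h⟩ : Fin n) σz - site x σz else 0)
      = (fun k => if k + 1 < n then G (k+1) - G k else 0) (x:ℕ) := by
    intro x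
    show _ = (if (x:ℕ) + 1 < n then G ((x:ℕ)+1) - G (x:ℕ) else 0)
    by_cases h : (x:ℕ)+1 < n
    · rw [dif_pos h, if_pos h]
      have h1 : G ((x:ℕ)+1) = site (⟨(x:ℕ)+1, h⟩ : Fin n) σz := by
        rw [hG]; exact dif_pos h
      have h2 : G (x:ℕ) = site x σz := by
        rw [hG]; exact dif_pos x.isLt
      rw [h1, h2]
    · rw [dif_neg h, if_neg h]
  rw [Finset.sum_congr rfl (fun x _ => step2 x),
    Fin.sum_univ_eq_sum_range (fun k => if k + 1 < n then G (k+1) - G k else 0)]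
  rw [← Finset.sum_subset (Finset.range_subset_range.mpr (show n-1 ≤ n by omega))
    (fun k hk hk2 => if_neg (by
      have h1 := Finset.mem_range.mp hk
      have h2 : ¬ k < n-1 := fun hc => hk2 (Finset.mem_range.mpr hc)
      omega))]
  rw [Finset.sum_congr rfl
    (fun k hk => if_pos (show k+1 < n by have := Finset.mem_range.mp hk; omega))]
  rw [Finset.sum_range_sub (fun k => G k)]
  have e1 : G (n-1) = site (⟨n-1, by omega⟩ : Fin n) σz := by
    rw [hG]; exact dif_pos (by omega)
  have e0 : G 0 = site (⟨0, by omega⟩ : Fin n) σz := by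
    rw [hG]; exact dif_pos (by omega)
  rw [e1, e0, sub_eq_neg_add]

end
end
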